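/- If M →v N under weak call-by-value reduction, t is a canonical Φ-term, and ⟦t⟧ = M, then there exists a Φ-term u such that t rewrites in one step to u in Φ and ⟦u⟧ = N. -/

import Mathlib

/-- Untyped λ-terms over variables drawn from ℕ (a denumerable totally ordered set). -/
inductive Lam : Type
  | var : ℕ → Lam
  | lam : ℕ → Lam → Lam
  | app : Lam → Lam → Lam
deriving DecidableEq, Repr

namespace Lam

/-- Capture-permitting substitution M{N/x} (adequate for weak reduction of closed terms). -/
def subst : Lam → ℕ → Lam → Lam
  | var y, x, N => if y = x then N else var y
  | lam y M, x, N => if y = x then lam y M else lam y (subst M x N)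
  | app M₁ M₂, x, N => app (subst M₁ x N) (subst M₂ x N)

/-- Simultaneous substitution along a partial assignment of terms to variables. -/
def msubst : Lam → (ℕ → Option Lam) → Lam
  | var y, σ => (σ y).getD (var y)
  | lam y M, σ => lam y (msubst M (fun z => if z = y then none else σ z))
  | app M₁ M₂, σ => app (msubst M₁ σ) (msubst M₂ σ)

/-- The assignment sending each `xᵢ` to `tᵢ` (first match wins). -/
def substOf (xs : List ℕ) (ts : List Lam) : ℕ → Option Lam :=
  fun y => (xs.zip ts).lookup y

/-- Values: variables and abstractions. -/
def IsValue : Lam → Prop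
  | var _ => True
  | lam _ _ => True
  | app _ _ => False

/-- Weak call-by-value reduction. -/
inductive CbvStep : Lam → Lam → Prop
  | beta {x : ℕ} {M V : Lam} : IsValue V → CbvStep (app (lam x M) V) (subst M x V)
  | appL {M N L : Lam} : CbvStep M N → CbvStep (app M L) (app N L)
  | appR {M N L : Lam} : CbvStep M N → CbvStep (app L M) (app L N)

/-- A →v-normal form. -/
def CbvNormal (M : Lam) : Prop := ¬ ∃ N, CbvStep M N

/-- Free variables, as a finite set. -/
def fv : Lam → Finset ℕ
  | var x => {x}
  | lam x M => fv M \ {x}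
  | app M N => fv M ∪ fv N

/-- The sequence (without repetitions, in variable order) of free variables of `M`. -/
def fvList (M : Lam) : List ℕ := (fv M).sort (· ≤ ·)

def Closed (M : Lam) : Prop := fv M = ∅

/-- The size |M| of a λ-term. -/
def size : Lam → ℕ
  | var _ => 1
  | lam _ M => size M + 1
  | app M N => size M + size N + 1

end Lam

/-- `NSteps r n a b`: `a` reduces to `b` in exactly `n` `r`-steps. -/
def NSteps {α : Type*} (r : α → α → Prop) : ℕ → α → α → Prop
  | 0 => fun a b => a = b
  | n + 1 => fun a c => ∃ b, r a b ∧ NSteps r n b c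

/-- Terms of the constructor rewrite system Φ: variables, the binary function symbol
`app`, and for every λ-term `M` and variable `x` a constructor `c_{x,M}` (here `con x M`),
whose arity is the length of `FV(λx.M)`. -/
inductive PTerm : Type
  | var : ℕ → PTerm
  | app : PTerm → PTerm → PTerm
  | con : ℕ → Lam → List PTerm → PTerm

namespace PTerm

/-- Well-formed Φ-terms: every constructor is applied to as many arguments as its arity. -/
inductive WF : PTerm → Prop
  | var {x} : WF (var x)
  | app {u v} : WF u → WF v → WF (app u v)
  | con {x M ts} : ts.length = (Lam.fvList (Lam.lam x M)).length →
      (∀ t ∈ ts, WF t) → WF (con x M ts)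

/-- Constructor terms: built only from constructors. -/
inductive IsConTerm : PTerm → Prop
  | con {x M ts} : (∀ t ∈ ts, IsConTerm t) → IsConTerm (con x M ts)

/-- Canonical closed Φ-terms. -/
inductive Canonical : PTerm → Prop
  | con {t} : IsConTerm t → Canonical t
  | app {u v} : Canonical u → Canonical v → Canonical (app u v)

/-- Closed Φ-terms contain no variables. -/
inductive ClosedP : PTerm → Prop
  | app {u v} : ClosedP u → ClosedP v → ClosedP (app u v)
  | con {x M ts} : (∀ t ∈ ts, ClosedP t) → ClosedP (con x M ts)

/-- Substitution of Φ-terms for variables. -/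
def psubst (σ : ℕ → Option PTerm) : PTerm → PTerm
  | var y => (σ y).getD (var y)
  | app u v => app (psubst σ u) (psubst σ v)
  | con x M ts => con x M (ts.attach.map (fun t => psubst σ t.1))
decreasing_by
  all_goals simp_wf
  all_goals try have := List.sizeOf_lt_of_mem t.2
  all_goals omega

/-- The assignment sending each `xᵢ` to `tᵢ`. -/
def substOfP (xs : List ℕ) (ts : List PTerm) : ℕ → Option PTerm :=
  fun y => (xs.zip ts).lookup y

/-- Variables occurring in a Φ-term. -/
def pvars : PTerm → List ℕ
  | var y => [y]
  | app u v => pvars u ++ pvars v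
  | con _ _ ts => ts.attach.flatMap (fun t => pvars t.1)
decreasing_by
  all_goals simp_wf
  all_goals try have := List.sizeOf_lt_of_mem t.2
  all_goals omega

end PTerm

/-- The translation ⟨·⟩ from λ-terms to Φ-terms. -/
def transPhi : Lam → PTerm
  | .var x => .var x
  | .lam x M => .con x M ((Lam.fvList (.lam x M)).map .var)
  | .app M N => .app (transPhi M) (transPhi N)

/-- The readback ⟦·⟧ from Φ-terms to λ-terms. -/
def readback : PTerm → Lam
  | .var x => .var x
  | .app u v => .app (readback u) (readback v)
  | .con x M ts =>
      Lam.msubst (.lam x M)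
        (Lam.substOf (Lam.fvList (.lam x M)) (ts.attach.map (fun t => readback t.1)))
decreasing_by
  all_goals simp_wf
  all_goals try have := List.sizeOf_lt_of_mem t.2
  all_goals omega

/-- One-step rewriting in Φ: the rule app(c_{x,M}(x₁,…,xₙ), x) → ⟨M⟩ (matched variables
instantiated by constructor terms), closed under arbitrary contexts. -/
inductive PhiStep : PTerm → PTerm → Prop
  | root {x : ℕ} {M : Lam} {ts : List PTerm} {v : PTerm} :
      (∀ t ∈ ts, PTerm.IsConTerm t) → PTerm.IsConTerm v →
      ts.length = (Lam.fvList (.lam x M)).length →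
      PhiStep (.app (.con x M ts) v)
        (PTerm.psubst (PTerm.substOfP (Lam.fvList (.lam x M) ++ [x]) (ts ++ [v])) (transPhi M))
  | appL {u u' v} : PhiStep u u' → PhiStep (.app u v) (.app u' v)
  | appR {u v v'} : PhiStep v v' → PhiStep (.app u v) (.app u v')
  | conArg {x M ts₁ t t' ts₂} : PhiStep t t' →
      PhiStep (.con x M (ts₁ ++ t :: ts₂)) (.con x M (ts₁ ++ t' :: ts₂))

/-- Φ-normal forms. -/
def PhiNormal (t : PTerm) : Prop := ¬ ∃ u, PhiStep t u

section Aux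

open Lam PTerm

/-! ### List lookup/zip lemmas -/

lemma lookup_append {α β : Type*} [BEq α] (l₁ l₂ : List (α × β)) (y : α) :
    (l₁ ++ l₂).lookup y = ((l₁.lookup y).or (l₂.lookup y)) := by
  induction l₁ with
  | nil => simp [List.lookup]
  | cons a l ih =>
      by_cases h : y == a.1
      · simp [List.lookup, h]
      · simp only [List.cons_append, List.lookup, h]
        exact ih

lemma lookup_zip_none {xs : List ℕ} {y : ℕ} (hy : y ∉ xs) :
    ∀ {α : Type} (ts : List α), ((xs.zip ts).lookup y) = none := by
  induction xs with
  | nil => intro α ts; simp [List.lookup]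
  | cons a xs ih =>
      intro α ts
      cases ts with
      | nil => simp [List.lookup]
      | cons b ts =>
          have h1 : (y == a) = false := beq_eq_false_iff_ne.2 (fun h => hy (h ▸ List.mem_cons_self))
          simp only [List.zip_cons_cons, List.lookup, h1]
          exact ih (fun h => hy (List.mem_cons_of_mem a h)) ts

lemma lookup_zip_mem {α : Type*} {xs : List ℕ} {l : List α} {y : ℕ}
    (hy : y ∈ xs) (hl : xs.length = l.length) :
    ∃ v ∈ l, (xs.zip l).lookup y = some v := by
  induction xs generalizing l with
  | nil => cases hy
  | cons a xs ih =>
      cases l with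
      | nil => simp at hl
      | cons b l =>
          by_cases h : y = a
          · exact ⟨b, List.mem_cons_self, by simp [List.lookup, h]⟩
          · rcases List.mem_cons.1 hy with h' | h'
            · exact absurd h' h
            · obtain ⟨v, hv, hlook⟩ := ih h' (by simpa using hl)
              have hb : (y == a) = false := beq_eq_false_iff_ne.2 h
              exact ⟨v, List.mem_cons_of_mem _ hv, by simpa [List.lookup, hb] using hlook⟩

lemma lookup_zip_mem_right {α : Type*} {xs : List ℕ} {l : List α} {y : ℕ} {v : α}
    (h : (xs.zip l).lookup y = some v) : v ∈ l := by
  induction xs generalizing l with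
  | nil => simp [List.lookup] at h
  | cons a xs ih =>
      cases l with
      | nil => simp [List.lookup] at h
      | cons b l =>
          by_cases hy : y = a
          · simp [List.lookup, hy] at h
            exact h ▸ List.mem_cons_self
          · have hb : (y == a) = false := beq_eq_false_iff_ne.2 hy
            simp only [List.zip_cons_cons, List.lookup, hb] at h
            exact List.mem_cons_of_mem _ (ih h)

lemma lookup_zip_map {α β : Type*} {xs : List ℕ} {l : List α} (f : α → β) (y : ℕ) :
    ((xs.zip (l.map f)).lookup y) = ((xs.zip l).lookup y).map f := by
  induction xs generalizing l with
  | nil => simp [List.lookup]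
  | cons a xs ih =>
      cases l with
      | nil => simp [List.lookup]
      | cons b l =>
          by_cases h : y = a
          · simp [List.lookup, h]
          · have hb : (y == a) = false := beq_eq_false_iff_ne.2 h
            simpa [List.lookup, hb] using ih

lemma lookup_zip_self_map {α : Type*} {xs : List ℕ} (f : ℕ → α) {y : ℕ} (hy : y ∈ xs) :
    ((xs.zip (xs.map f)).lookup y) = some (f y) := by
  induction xs with
  | nil => cases hy
  | cons a xs ih =>
      by_cases h : y = a
      · simp [List.lookup, h]
      · rcases List.mem_cons.1 hy with h' | h'
        · exact absurd h' h
        · have hb : (y == a) = false := beq_eq_false_iff_ne.2 h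
          simpa [List.lookup, hb] using ih h'

lemma attach_map_aux {α β : Type*} (l : List α) (f : α → β) :
    l.attach.map (fun t => f t.1) = l.map f := by
  simp

/-! ### fvList membership -/

lemma mem_fvList {M : Lam} {y : ℕ} : y ∈ Lam.fvList M ↔ y ∈ Lam.fv M := by
  simp [Lam.fvList, Finset.mem_sort]

/-! ### msubst lemmas -/

lemma msubst_congr' {M : Lam} {σ₁ σ₂ : ℕ → Option Lam}
    (h : ∀ y ∈ Lam.fv M, (σ₁ y).getD (Lam.var y) = (σ₂ y).getD (Lam.var y)) :
    Lam.msubst M σ₁ = Lam.msubst M σ₂ := by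
  induction M generalizing σ₁ σ₂ with
  | var y => simpa [Lam.msubst] using h y (by simp [Lam.fv])
  | lam y M ih =>
      simp only [Lam.msubst, Lam.lam.injEq, true_and]
      apply ih
      intro z hz
      by_cases hzy : z = y
      · simp [hzy]
      · simpa [hzy] using h z (by simp [Lam.fv, hz, hzy])
  | app M₁ M₂ ih₁ ih₂ =>
      simp only [Lam.msubst, Lam.app.injEq]
      exact ⟨ih₁ fun y hy => h y (by simp [Lam.fv, hy]),
             ih₂ fun y hy => h y (by simp [Lam.fv, hy])⟩

lemma fv_msubst_subset {M : Lam} {σ : ℕ → Option Lam} {S : Finset ℕ}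
    (h1 : ∀ z ∈ Lam.fv M, ∀ t, σ z = some t → Lam.fv t ⊆ S)
    (h2 : ∀ z ∈ Lam.fv M, σ z = none → z ∈ S) :
    Lam.fv (Lam.msubst M σ) ⊆ S := by
  induction M generalizing σ S with
  | var y =>
      cases hy : σ y with
      | none => simpa [Lam.msubst, hy, Lam.fv] using h2 y (by simp [Lam.fv]) hy
      | some t => simpa [Lam.msubst, hy] using h1 y (by simp [Lam.fv]) t hy
  | lam y M ih =>
      simp only [Lam.msubst, Lam.fv]
      intro z hz
      simp only [Finset.mem_sdiff, Finset.mem_singleton] at hz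
      obtain ⟨hz1, hz2⟩ := hz
      have key : Lam.fv (Lam.msubst M (fun w => if w = y then none else σ w)) ⊆
          insert y S := by
        apply ih
        · intro w hw t ht
          by_cases hwy : w = y
          · simp [hwy] at ht
          · simp only [if_neg hwy] at ht
            exact (h1 w (by simp [Lam.fv, hw, hwy]) t ht).trans (Finset.subset_insert _ _)
        · intro w hw hwn
          by_cases hwy : w = y
          · simp [hwy]
          · simp only [if_neg hwy] at hwn
            exact Finset.mem_insert_of_mem (h2 w (by simp [Lam.fv, hw, hwy]) hwn)
      rcases Finset.mem_insert.1 (key hz1) with h | h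
      · exact absurd h hz2
      · exact h
  | app M₁ M₂ ih₁ ih₂ =>
      simp only [Lam.msubst, Lam.fv]
      apply Finset.union_subset
      · exact ih₁ (fun z hz => h1 z (by simp [Lam.fv, hz])) (fun z hz => h2 z (by simp [Lam.fv, hz]))
      · exact ih₂ (fun z hz => h1 z (by simp [Lam.fv, hz])) (fun z hz => h2 z (by simp [Lam.fv, hz]))

lemma subst_of_not_free {M : Lam} {x : ℕ} {V : Lam} (h : x ∉ Lam.fv M) :
    Lam.subst M x V = M := by
  induction M with
  | var y =>
      have : y ≠ x := by simpa [Lam.fv, eq_comm] using h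
      simp [Lam.subst, this]
  | lam y M ih =>
      by_cases hyx : y = x
      · simp [Lam.subst, hyx]
      · have : x ∉ Lam.fv M := by
          intro hx
          exact h (by simp [Lam.fv, hx, Ne.symm hyx])
        simp [Lam.subst, hyx, ih this]
  | app M₁ M₂ ih₁ ih₂ =>
      have h₁ : x ∉ Lam.fv M₁ := fun hx => h (by simp [Lam.fv, hx])
      have h₂ : x ∉ Lam.fv M₂ := fun hx => h (by simp [Lam.fv, hx])
      simp [Lam.subst, ih₁ h₁, ih₂ h₂]

lemma subst_msubst {M : Lam} {σ : ℕ → Option Lam} {x : ℕ} {V : Lam}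
    (hx : σ x = none)
    (h : ∀ y ∈ Lam.fv M, ∀ t, σ y = some t → x ∉ Lam.fv t) :
    Lam.subst (Lam.msubst M σ) x V =
      Lam.msubst M (fun y => if y = x then some V else σ y) := by
  induction M generalizing σ with
  | var y =>
      by_cases hyx : y = x
      · subst hyx; simp [Lam.msubst, hx, Lam.subst]
      · cases hy : σ y with
        | none => simp [Lam.msubst, hy, Lam.subst, hyx]
        | some t =>
            simp only [Lam.msubst, hy, Option.getD_some, if_neg hyx]
            exact subst_of_not_free (h y (by simp [Lam.fv]) t hy)
  | lam y M ih =>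
      by_cases hyx : y = x
      · subst hyx
        simp only [Lam.msubst, Lam.subst, if_pos trivial, eq_self_iff_true, if_true, Lam.lam.injEq, true_and]
        apply msubst_congr'
        intro z hz
        by_cases hzy : z = y <;> simp [hzy]
      · simp only [Lam.msubst, Lam.subst, if_neg hyx, Lam.lam.injEq, true_and]
        rw [ih (σ := fun w => if w = y then none else σ w)
            (by simp [Ne.symm hyx, hx])
            (by
              intro w hw t ht
              by_cases hwy : w = y
              · simp [hwy] at ht
              · simp only [if_neg hwy] at ht
                exact h w (by simp [Lam.fv, hw, hwy]) t ht)]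
        apply msubst_congr'
        intro z hz
        by_cases hzy : z = y
        · subst hzy; simp [Ne.symm hyx, hyx]
        · by_cases hzx : z = x <;> simp [hzy, hzx, Ne.symm hyx]
  | app M₁ M₂ ih₁ ih₂ =>
      simp only [Lam.msubst, Lam.subst, Lam.app.injEq]
      exact ⟨ih₁ hx (fun y hy => h y (by simp [Lam.fv, hy])),
             ih₂ hx (fun y hy => h y (by simp [Lam.fv, hy]))⟩

/-! ### readback computation lemmas -/

lemma readback_con (x : ℕ) (M : Lam) (ts : List PTerm) :
    readback (PTerm.con x M ts) =
      Lam.msubst (Lam.lam x M)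
        (Lam.substOf (Lam.fvList (Lam.lam x M)) (ts.map readback)) := by
  rw [readback, attach_map_aux ts readback]

lemma psubst_con (σ : ℕ → Option PTerm) (x : ℕ) (M : Lam) (ts : List PTerm) :
    PTerm.psubst σ (PTerm.con x M ts) = PTerm.con x M (ts.map (PTerm.psubst σ)) := by
  rw [PTerm.psubst, attach_map_aux ts (PTerm.psubst σ)]

lemma readback_psubst (M : Lam) (ρ : ℕ → Option PTerm) :
    readback (PTerm.psubst ρ (transPhi M)) =
      Lam.msubst M (fun y => (ρ y).map readback) := by
  induction M generalizing ρ with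
  | var y =>
      cases hy : ρ y with
      | none => simp [transPhi, PTerm.psubst, hy, readback, Lam.msubst]
      | some t => simp [transPhi, PTerm.psubst, hy, Lam.msubst]
  | lam z P ih =>
      clear ih
      rw [transPhi, psubst_con, readback_con]
      apply msubst_congr'
      intro y hy
      have hy' : y ∈ Lam.fvList (Lam.lam z P) := mem_fvList.2 hy
      simp only [Lam.substOf, List.map_map]
      rw [lookup_zip_self_map (readback ∘ PTerm.psubst ρ ∘ PTerm.var) hy']
      simp only [Option.getD_some, Function.comp_apply]
      cases hρ : ρ y with
      | none => simp [PTerm.psubst, hρ, readback]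
      | some t => simp [PTerm.psubst, hρ]
  | app M₁ M₂ ih₁ ih₂ =>
      simp only [transPhi, PTerm.psubst, readback, Lam.msubst, ih₁, ih₂]

/-! ### closedness of readback -/

lemma readback_closed {t : PTerm} (hwf : PTerm.WF t) (hcl : PTerm.ClosedP t) :
    Lam.fv (readback t) = ∅ := by
  induction hwf with
  | var => cases hcl
  | app h1 h2 ih1 ih2 =>
      cases hcl with
      | app hc1 hc2 =>
          simp only [readback, Lam.fv, ih1 hc1, ih2 hc2, Finset.union_empty]
  | @con x M ts hlen hts ih =>
      have hcl' : ∀ t ∈ ts, PTerm.ClosedP t := by cases hcl with | con h => exact h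
      rw [readback_con]
      apply Finset.subset_empty.1
      apply fv_msubst_subset (S := ∅)
      · intro z hz t ht
        have := lookup_zip_mem_right (l := ts.map readback) ht
        obtain ⟨s, hs, rfl⟩ := List.mem_map.1 this
        rw [ih s hs (hcl' s hs)]
      · intro z hz hn
        have hz' : z ∈ Lam.fvList (Lam.lam x M) := mem_fvList.2 hz
        obtain ⟨v, hv, hlook⟩ := lookup_zip_mem (l := ts.map readback) hz'
          (by simpa using hlen.symm)
        rw [Lam.substOf] at hn
        rw [hn] at hlook
        cases hlook

/-! ### shape lemmas -/

lemma readback_con_eq_lam (x : ℕ) (M : Lam) (ts : List PTerm) :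
    ∃ P, readback (PTerm.con x M ts) = Lam.lam x P := by
  rw [readback_con]
  exact ⟨_, rfl⟩

lemma canonical_app {u v : PTerm} (h : PTerm.Canonical (PTerm.app u v)) :
    PTerm.Canonical u ∧ PTerm.Canonical v := by
  cases h with
  | con h => cases h
  | app h1 h2 => exact ⟨h1, h2⟩

lemma x_not_mem_fvList (x : ℕ) (M : Lam) : x ∉ Lam.fvList (Lam.lam x M) := by
  rw [mem_fvList]
  simp [Lam.fv]

end Aux

/-- If M →v N, t is canonical and ⟦t⟧ = M, then t rewrites in one step in Φ to
some u with ⟦u⟧ = N. -/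
theorem cbvStep_lift (M N : Lam) (t : PTerm) (hwf : PTerm.WF t)
    (hcl : PTerm.ClosedP t) (hcan : PTerm.Canonical t)
    (hstep : Lam.CbvStep M N) (hrb : readback t = M) :
    ∃ u : PTerm, PhiStep t u ∧ readback u = N := by
  induction hstep generalizing t with
  | @beta x M V hV =>
      cases t with
      | var y => cases hcl
      | con x' M' ts => simp [readback_con, Lam.msubst] at hrb
      | app u v =>
          cases hwf with | app hwfu hwfv =>
          cases hcl with | app hclu hclv =>
          obtain ⟨hcanu, hcanv⟩ := canonical_app hcan
          simp only [readback, Lam.app.injEq] at hrb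
          obtain ⟨hru, hrv⟩ := hrb
          -- v is a constructor term
          have hvc : PTerm.IsConTerm v := by
            cases hcanv with
            | con h => exact h
            | app h1 h2 =>
                rw [← hrv] at hV
                simp [readback, Lam.IsValue] at hV
          -- u must be a constructor with binder x
          cases u with
          | var y => cases hclu
          | app u1 u2 => simp [readback] at hru
          | con x' M' ts =>
              have hts : ∀ s ∈ ts, PTerm.IsConTerm s := by
                cases hcanu with
                | con h => cases h with | con h' => exact h'
              have hwts : ∀ s ∈ ts, PTerm.WF s := by
                cases hwfu with | con _ h => exact h
              have hclts : ∀ s ∈ ts, PTerm.ClosedP s := by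
                cases hclu with | con h => exact h
              have hlen : ts.length = (Lam.fvList (Lam.lam x' M')).length := by
                cases hwfu with | con h _ => exact h
              rw [readback_con] at hru
              simp only [Lam.msubst, Lam.lam.injEq] at hru
              obtain ⟨hx, hM⟩ := hru
              subst hx
              refine ⟨_, PhiStep.root hts hvc hlen, ?_⟩
              rw [readback_psubst]
              -- abbreviations
              set fvl := Lam.fvList (Lam.lam x' M') with hfvl
              have hσ₀ : Lam.subst M x' V =
                  Lam.msubst M' (fun z => if z = x' then some V else
                    (if z = x' then none else
                      Lam.substOf fvl (ts.map readback) z)) := by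
                rw [← hM, ← hrv]
                apply subst_msubst
                · simp
                · intro z hz t ht
                  by_cases hzx : z = x'
                  · simp [hzx] at ht
                  · simp only [if_neg hzx] at ht
                    have := lookup_zip_mem_right (xs := fvl) (l := ts.map readback) ht
                    obtain ⟨s, hs, rfl⟩ := List.mem_map.1 this
                    rw [readback_closed (hwts s hs) (hclts s hs)]
                    simp
              rw [hσ₀]
              apply msubst_congr'
              intro z hz
              have hzip : (fvl ++ [x']).zip (ts ++ [v]) = fvl.zip ts ++ [(x', v)] := by
                rw [List.zip_append hlen.symm]
                simp
              by_cases hzx : z = x'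
              · subst hzx
                have h1 : (fvl.zip ts).lookup z = none :=
                  lookup_zip_none (x_not_mem_fvList z M') ts
                simp only [PTerm.substOfP, hzip, lookup_append, h1, Option.none_or,
                  List.lookup, beq_self_eq_true]
                simp [hrv]
              · have hz' : z ∈ fvl := by
                  rw [hfvl, mem_fvList]
                  simp [Lam.fv, hz, hzx]
                obtain ⟨s, hs, hlook⟩ := lookup_zip_mem (l := ts) hz' (by omega)
                have h2 : (fvl.zip (ts.map readback)).lookup z = some (readback s) := by
                  rw [lookup_zip_map, hlook, Option.map_some]
                simp only [PTerm.substOfP, hzip, lookup_append, hlook, if_neg hzx]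
                simp [Lam.substOf, h2]
  | @appL M N L h ih =>
      cases t with
      | var y => cases hcl
      | con x' M' ts => simp [readback_con, Lam.msubst] at hrb
      | app u v =>
          cases hwf with | app hwfu hwfv =>
          cases hcl with | app hclu hclv =>
          obtain ⟨hcanu, hcanv⟩ := canonical_app hcan
          simp only [readback, Lam.app.injEq] at hrb
          obtain ⟨hru, hrv⟩ := hrb
          obtain ⟨u', hs, hru'⟩ := ih u hwfu hclu hcanu hru
          exact ⟨.app u' v, PhiStep.appL hs, by simp [readback, hru', hrv]⟩
  | @appR M N L h ih =>
      cases t with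
      | var y => cases hcl
      | con x' M' ts => simp [readback_con, Lam.msubst] at hrb
      | app u v =>
          cases hwf with | app hwfu hwfv =>
          cases hcl with | app hclu hclv =>
          obtain ⟨hcanu, hcanv⟩ := canonical_app hcan
          simp only [readback, Lam.app.injEq] at hrb
          obtain ⟨hru, hrv⟩ := hrb
          obtain ⟨v', hs, hrv'⟩ := ih v hwfv hclv hcanv hrv
          exact ⟨.app u v', PhiStep.appR hs, by simp [readback, hru, hrv']⟩
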